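/- Let A be a C*-algebra, let n be a positive natural number, and let x = (x_{j,k}) be a positive element of M_n(A). Then there exists an index k with ‖x_{k,k}‖ ≥ n^{-2} · ‖x‖. -/

import Mathlib

open Matrix
open scoped ComplexOrder

noncomputable section

/-- Auxiliary: a complete C*-norm on a complex star ring. -/
structure CSN (M : Type*) [NonUnitalRing M] [StarRing M] [Module ℂ M] where
  N : M → ℝ
  nonneg : ∀ a, 0 ≤ N a
  eq_zero : ∀ a, N a = 0 ↔ a = 0
  add_le : ∀ a b, N (a + b) ≤ N a + N b
  smul' : ∀ (c : ℂ) a, N (c • a) = ‖c‖ * N a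
  mul_le : ∀ a b, N (a * b) ≤ N a * N b
  star_self : ∀ a, N (star a * a) = N a * N a
  complete : ∀ f : ℕ → M, (∀ ε : ℝ, 0 < ε → ∃ K, ∀ i ≥ K, ∀ j ≥ K, N (f i - f j) < ε) →
      ∃ l, ∀ ε : ℝ, 0 < ε → ∃ K, ∀ i ≥ K, N (f i - l) < ε

namespace CSN

variable {M : Type*} [NonUnitalRing M] [StarRing M] [Module ℂ M]
  [IsScalarTower ℂ M M] [SMulCommClass ℂ M M] [StarModule ℂ M]

/-- Type synonym for `M` carrying the norm `d.N`. -/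
def S (_d : CSN M) : Type _ := M

variable (d : CSN M)

/-- The identity map `M → d.S`. -/
def mk' (a : M) : d.S := a

instance : NonUnitalRing d.S := ‹NonUnitalRing M›
instance : StarRing d.S := ‹StarRing M›
instance : Module ℂ d.S := ‹Module ℂ M›
instance : IsScalarTower ℂ d.S d.S := ‹IsScalarTower ℂ M M›
instance : SMulCommClass ℂ d.S d.S := ‹SMulCommClass ℂ M M›
instance : StarModule ℂ d.S := ‹StarModule ℂ M›

omit [IsScalarTower ℂ M M] [SMulCommClass ℂ M M] [StarModule ℂ M] in
lemma neg' (a : M) : d.N (-a) = d.N a := by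
  have := d.smul' (-1) a
  simpa using this

/-- The norm as an `AddGroupNorm`. -/
def agn : AddGroupNorm d.S where
  toFun := d.N
  map_zero' := (d.eq_zero 0).mpr rfl
  add_le' := d.add_le
  neg' := d.neg'
  eq_zero_of_map_eq_zero' a h := (d.eq_zero a).mp h

instance : NormedAddCommGroup d.S := d.agn.toNormedAddCommGroup

lemma norm_def (a : d.S) : ‖a‖ = d.N a := rfl

instance : NonUnitalNormedRing d.S :=
  { ‹NonUnitalRing M›, (inferInstance : NormedAddCommGroup d.S) with
    norm_mul_le := fun a b => by exact d.mul_le a b }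

instance : CStarRing d.S where
  norm_mul_self_le x := le_of_eq (d.star_self x).symm

instance : NormedSpace ℂ d.S where
  norm_smul_le c a := le_of_eq (d.smul' c a)

instance : CompleteSpace d.S := Metric.complete_of_cauchySeq_tendsto <| by
  intro f hf
  obtain ⟨l, hl⟩ := d.complete f <| by
    intro ε hε
    obtain ⟨K, hK⟩ := Metric.cauchySeq_iff.mp hf ε hε
    exact ⟨K, fun i hi j hj => by have h := hK i hi j hj; rw [dist_eq_norm] at h; exact h⟩
  refine ⟨l, Metric.tendsto_atTop.mpr fun ε hε => ?_⟩
  obtain ⟨K, hK⟩ := hl ε hε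
  exact ⟨K, fun i hi => lt_of_eq_of_lt (dist_eq_norm (f i) (show d.S from l)) (hK i hi)⟩

instance : NonUnitalCStarAlgebra d.S where
  __ := (inferInstance : NonUnitalNormedRing d.S)
  __ := (inferInstance : StarRing d.S)
  __ := (inferInstance : CompleteSpace d.S)
  __ := (inferInstance : CStarRing d.S)
  __ := (inferInstance : NormedSpace ℂ d.S)
  __ := (inferInstance : IsScalarTower ℂ d.S d.S)
  __ := (inferInstance : SMulCommClass ℂ d.S d.S)
  __ := (inferInstance : StarModule ℂ d.S)

end CSN

section Matrices

variable {A : Type*} [NonUnitalCStarAlgebra A] {n : ℕ}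

lemma star_stdBasisMatrix' (j k : Fin n) (a : A) :
    star (single j k a) = single k j (star a) := by
  ext i l
  rw [Matrix.star_apply]
  by_cases h : k = i ∧ j = l
  · obtain ⟨h1, h2⟩ := h
    subst h1; subst h2
    simp
  · have h' : ¬(j = l ∧ k = i) := fun ⟨u, v⟩ => h ⟨v, u⟩
    rw [Matrix.single_apply_of_ne _ _ _ _ _ h', Matrix.single_apply_of_ne _ _ _ _ _ h,
      star_zero]

/-- Every single-entry matrix has `N`-norm equal to the norm of its entry. -/
lemma CSN.norm_stdBasisMatrix (d : CSN (Matrix (Fin n) (Fin n) A)) (j k : Fin n) (a : A) :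
    d.N (single j k a) = ‖a‖ := by
  have hdiag : ∀ (k : Fin n) (a : A), d.N (single k k a) = ‖a‖ := by
    intro k a
    let φ : A →⋆ₙₐ[ℂ] d.S :=
      { toFun := fun a => d.mk' (single k k a)
        map_add' := fun a b => single_add k k a b
        map_zero' := single_zero k k
        map_mul' := fun a b => (Matrix.single_mul_single_same a k k k b).symm
        map_smul' := fun c a => (smul_single c k k a).symm
        map_star' := fun a => (star_stdBasisMatrix' k k a).symm }
    have hinj : Function.Injective φ := by
      intro a b h
      have h2 : (single k k a : Matrix (Fin n) (Fin n) A) = single k k b := h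
      have := congrArg (fun m : Matrix (Fin n) (Fin n) A => m k k) h2
      simpa using this
    exact NonUnitalStarAlgHom.norm_map φ hinj a
  have h2 : d.N (single j k a) * d.N (single j k a) = ‖a‖ * ‖a‖ := by
    rw [← d.star_self, star_stdBasisMatrix', Matrix.single_mul_single_same, hdiag,
      CStarRing.norm_star_mul_self]
  exact (mul_self_inj (d.nonneg _) (norm_nonneg a)).mp h2

lemma CSN.N_le_sum (d : CSN (Matrix (Fin n) (Fin n) A)) (x : Matrix (Fin n) (Fin n) A) :
    d.N x ≤ ∑ j : Fin n, ∑ k : Fin n, ‖x j k‖ := by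
  have h0 : d.N x = ‖(∑ j : Fin n, ∑ k : Fin n,
      d.mk' (single j k (x j k)) : d.S)‖ := by
    congr 1
    show (x : Matrix (Fin n) (Fin n) A) = ∑ j : Fin n, ∑ k : Fin n, single j k (x j k)
    exact matrix_eq_sum_single x
  rw [h0]
  refine (norm_sum_le _ _).trans ?_
  refine Finset.sum_le_sum fun j _ => (norm_sum_le _ _).trans (Finset.sum_le_sum fun k _ => ?_)
  exact le_of_eq (d.norm_stdBasisMatrix j k (x j k))

open scoped InnerProductSpace in
/-- Cauchy–Schwarz for entries of a positive matrix. -/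
lemma entry_norm_le (z : Matrix (Fin n) (Fin n) A) (j k : Fin n) :
    ‖(star z * z) j k‖ ≤ Real.sqrt ‖(star z * z) j j‖ * Real.sqrt ‖(star z * z) k k‖ := by
  letI : PartialOrder (Unitization ℂ A) := CStarAlgebra.spectralOrder _
  letI : StarOrderedRing (Unitization ℂ A) := CStarAlgebra.spectralOrderedRing _
  have hentry : ∀ j k : Fin n, (star z * z) j k = ∑ i, star (z i j) * z i k := by
    intro j k
    simp [Matrix.mul_apply, Matrix.star_apply]
  let col : Fin n → WithCStarModule (Unitization ℂ A) (Fin n → Unitization ℂ A) := fun j =>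
    (WithCStarModule.equiv (Unitization ℂ A) _).symm fun i => ((star (z i j) : A) : Unitization ℂ A)
  have hinner : ∀ j k : Fin n, ⟪col k, col j⟫_(Unitization ℂ A) = (((star z * z) j k : A) : Unitization ℂ A) := by
    intro j k
    rw [WithCStarModule.pi_inner]
    have : ∀ i : Fin n, ⟪col k i, col j i⟫_(Unitization ℂ A) = (((star (z i j) * z i k : A)) : Unitization ℂ A) := by
      intro i
      rw [WithCStarModule.inner_def]
      show ((star (z i j) : A) : Unitization ℂ A) * star ((star (z i k) : A) : Unitization ℂ A) = _
      rw [← Unitization.inr_star, ← Unitization.inr_mul, star_star]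
    rw [Finset.sum_congr rfl fun i _ => this i, hentry]
    exact (map_sum (Unitization.inrNonUnitalStarAlgHom ℂ A) _ _).symm
  have hnorm : ∀ j : Fin n, ‖col j‖ = Real.sqrt ‖(star z * z) j j‖ := by
    intro j
    rw [WithCStarModule.pi_norm]
    congr 1
    have := hinner j j
    rw [WithCStarModule.pi_inner] at this
    rw [this, Unitization.norm_inr]
  have hCS : ‖⟪col k, col j⟫_(Unitization ℂ A)‖ ≤ ‖col k‖ * ‖col j‖ :=
    CStarModule.norm_inner_le (WithCStarModule (Unitization ℂ A) (Fin n → Unitization ℂ A))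
  rw [hinner, Unitization.norm_inr, hnorm, hnorm] at hCS
  rw [mul_comm]
  exact hCS

end Matrices

/-- A positive `n × n` matrix over a C*-algebra has some diagonal entry of norm at
least `n⁻² ‖x‖`, where `‖x‖` is computed with respect to (the necessarily unique)
complete C*-norm `N` on the matrix algebra `Mₙ(A)`. -/
theorem exists_diag_norm_ge_of_posSemidef (A : Type*) [NonUnitalCStarAlgebra A]
    (n : ℕ) (hn : 0 < n) (N : Matrix (Fin n) (Fin n) A → ℝ)
    (hN_nonneg : ∀ a, 0 ≤ N a)
    (hN_zero : ∀ a, N a = 0 ↔ a = 0)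
    (hN_add : ∀ a b, N (a + b) ≤ N a + N b)
    (hN_smul : ∀ (c : ℂ) a, N (c • a) = ‖c‖ * N a)
    (hN_mul : ∀ a b, N (a * b) ≤ N a * N b)
    (hN_star : ∀ a, N (star a * a) = N a * N a)
    (hN_complete : ∀ f : ℕ → Matrix (Fin n) (Fin n) A,
      (∀ ε : ℝ, 0 < ε → ∃ K, ∀ i ≥ K, ∀ j ≥ K, N (f i - f j) < ε) →
      ∃ l, ∀ ε : ℝ, 0 < ε → ∃ K, ∀ i ≥ K, N (f i - l) < ε)
    (x : Matrix (Fin n) (Fin n) A)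
    (hpos : ∃ z : Matrix (Fin n) (Fin n) A, x = star z * z) :
    ∃ k : Fin n, ((n : ℝ) ^ 2)⁻¹ * N x ≤ ‖x k k‖ := by
  obtain ⟨z, hz⟩ := hpos
  let d : CSN (Matrix (Fin n) (Fin n) A) :=
    ⟨N, hN_nonneg, hN_zero, hN_add, hN_smul, hN_mul, hN_star, hN_complete⟩
  have hne : (Finset.univ : Finset (Fin n)).Nonempty := ⟨⟨0, hn⟩, Finset.mem_univ _⟩
  set m : ℝ := (Finset.univ : Finset (Fin n)).sup' hne fun l => ‖x l l‖ with hm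
  obtain ⟨k0, -, hk0⟩ := Finset.exists_mem_eq_sup' hne fun l => ‖x l l‖
  have hk0' : m = ‖x k0 k0‖ := hm.trans hk0
  have hm_nonneg : 0 ≤ m := by rw [hk0']; exact norm_nonneg _
  have hentry : ∀ j k : Fin n, ‖x j k‖ ≤ m := by
    intro j k
    have h1 : ‖x j k‖ ≤ Real.sqrt ‖x j j‖ * Real.sqrt ‖x k k‖ := by
      rw [hz]; exact entry_norm_le z j k
    refine h1.trans ?_
    have hj : ‖x j j‖ ≤ m := by rw [hm]; exact Finset.le_sup' (fun l => ‖x l l‖) (Finset.mem_univ j)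
    have hk : ‖x k k‖ ≤ m := by rw [hm]; exact Finset.le_sup' (fun l => ‖x l l‖) (Finset.mem_univ k)
    calc Real.sqrt ‖x j j‖ * Real.sqrt ‖x k k‖
        ≤ Real.sqrt m * Real.sqrt m :=
          mul_le_mul (Real.sqrt_le_sqrt hj) (Real.sqrt_le_sqrt hk) (Real.sqrt_nonneg _)
            (Real.sqrt_nonneg _)
      _ = m := Real.mul_self_sqrt hm_nonneg
  have hmain : N x ≤ (n : ℝ) ^ 2 * m := by
    have h2 : N x ≤ ∑ j : Fin n, ∑ k : Fin n, ‖x j k‖ := d.N_le_sum x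
    refine h2.trans ?_
    have h3 : ∑ j : Fin n, ∑ k : Fin n, ‖x j k‖ ≤ ∑ _j : Fin n, ∑ _k : Fin n, m :=
      Finset.sum_le_sum fun j _ => Finset.sum_le_sum fun k _ => hentry j k
    refine h3.trans (le_of_eq ?_)
    simp [Finset.sum_const, Finset.card_univ]
    ring
  refine ⟨k0, ?_⟩
  rw [← hk0']
  have hpow : (0 : ℝ) < (n : ℝ) ^ 2 := by positivity
  calc ((n : ℝ) ^ 2)⁻¹ * N x ≤ ((n : ℝ) ^ 2)⁻¹ * ((n : ℝ) ^ 2 * m) := by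
        exact mul_le_mul_of_nonneg_left hmain (by positivity)
    _ = m := by field_simp
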